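/- arXiv:2405.16068 — 2 statements merged into one kernel-verified Lean document; each statement's English description precedes it below -/
import Mathlib

section
/- Let p and q be primes with p = q^k + 1 for some integer k ≥ 1. Then for every integer n ≥ 1 and every integer r ≥ 2 with p ∤ r, the solution S(p, q^n, r) is maximal: S(p, q^n, r) = {m ∈ ℕ : m ≥ 2 and p ∤ m}. -/
/-- The smallest set `S(d,e,r)` of positive integers such that `r ∈ S`,
`n ∈ S` whenever `n^e ∈ S`, and `(n+d)^e ∈ S` whenever `n ∈ S`. -/
inductive GenS (d e r : ℕ) : ℕ → Prop
  | base : GenS d e r r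
  | down (n : ℕ) : GenS d e r (n ^ e) → GenS d e r n
  | up (n : ℕ) : GenS d e r n → GenS d e r ((n + d) ^ e)

namespace GenSAux

lemma add_d {d e r m : ℕ} (h : GenS d e r m) : GenS d e r (m + d) :=
  GenS.down _ (GenS.up _ h)

lemma add_mul_d {d e r m : ℕ} (h : GenS d e r m) (j : ℕ) : GenS d e r (m + d * j) := by
  induction j with
  | zero => simpa using h
  | succ j ih =>
      have h2 := add_d ih
      have heq : m + d * (j + 1) = m + d * j + d := by ring
      rw [heq]; exact h2

lemma of_pow {d e r : ℕ} : ∀ (s : ℕ) {m : ℕ}, GenS d e r (m ^ e ^ s) → GenS d e r m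
  | 0, m, h => by simpa using h
  | s + 1, m, h => of_pow s (GenS.down _ (by rw [← pow_mul, ← pow_succ]; exact h))

/-- The chain obtained from `r` by repeatedly applying `x ↦ (x + p)^e`. -/
def chain (p e r : ℕ) : ℕ → ℕ
  | 0 => r
  | i + 1 => (chain p e r i + p) ^ e

lemma chain_genS (p e r : ℕ) (i : ℕ) : GenS p e r (chain p e r i) := by
  induction i with
  | zero => exact GenS.base
  | succ i ih => exact GenS.up _ ih

lemma chain_modEq (p e r : ℕ) (i : ℕ) : chain p e r i ≡ r ^ e ^ i [MOD p] := by
  induction i with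
  | zero => simpa [chain] using Nat.ModEq.refl r
  | succ i ih =>
      have h1 : chain p e r i + p ≡ r ^ e ^ i [MOD p] := by
        calc chain p e r i + p ≡ chain p e r i + 0 [MOD p] :=
              Nat.ModEq.add_left _ (Nat.modEq_zero_iff_dvd.mpr dvd_rfl)
          _ = chain p e r i := by ring
          _ ≡ r ^ e ^ i [MOD p] := ih
      calc chain p e r (i + 1) = (chain p e r i + p) ^ e := rfl
        _ ≡ (r ^ e ^ i) ^ e [MOD p] := h1.pow e
        _ = r ^ e ^ (i + 1) := by rw [← pow_mul, ← pow_succ]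

lemma genS_sub (p e r : ℕ) (he : 1 ≤ e) (hp : p.Prime) (hr : 2 ≤ r) (hpr : ¬ p ∣ r)
    {m : ℕ} (hm : GenS p e r m) : 2 ≤ m ∧ ¬ p ∣ m := by
  induction hm with
  | base => exact ⟨hr, hpr⟩
  | down n _ ih =>
      obtain ⟨h2, hd⟩ := ih
      refine ⟨?_, fun hdvd => hd (dvd_pow hdvd (by omega))⟩
      by_contra hlt
      push_neg at hlt
      have hle : n ^ e ≤ 1 := by
        calc n ^ e ≤ 1 ^ e := Nat.pow_le_pow_left (by omega) e
          _ = 1 := one_pow e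
      omega
  | up n _ ih =>
      obtain ⟨h2, hd⟩ := ih
      constructor
      · calc 2 ≤ n + p := by omega
          _ ≤ (n + p) ^ e := Nat.le_self_pow (by omega) _
      · intro hdvd
        have h3 : p ∣ n + p := hp.dvd_of_dvd_pow hdvd
        exact hd ((Nat.dvd_add_self_right).mp h3)

lemma key (p e r K : ℕ) (he : 2 ≤ e) (hp : p.Prime)
    (hferm : ∀ b : ℕ, ¬ p ∣ b → b ^ e ^ K ≡ 1 [MOD p])
    (hpr : ¬ p ∣ r) (m : ℕ) (hm : 2 ≤ m) (hpm : ¬ p ∣ m) :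
    GenS p e r m := by
  set R := chain p e r K with hRdef
  have hRmem : GenS p e r R := chain_genS p e r K
  have hR1 : R ≡ 1 [MOD p] := (chain_modEq p e r K).trans (hferm r hpr)
  set s := R + K with hs
  have hpow : ¬ p ∣ m ^ e ^ R := fun hd => hpm (hp.dvd_of_dvd_pow hd)
  have hN1 : m ^ e ^ s ≡ 1 [MOD p] := by
    have h := hferm (m ^ e ^ R) hpow
    rwa [← pow_mul, ← pow_add] at h
  have hNR : R ≤ m ^ e ^ s := by
    have h1 : R < 2 ^ s := lt_of_lt_of_le (Nat.lt_two_pow_self (n := R))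
      (Nat.pow_le_pow_right (by norm_num) (by omega))
    have h2 : (2 : ℕ) ^ s ≤ e ^ s := Nat.pow_le_pow_left he s
    have h3 : e ^ s < 2 ^ e ^ s := Nat.lt_two_pow_self
    have h4 : (2 : ℕ) ^ e ^ s ≤ m ^ e ^ s := Nat.pow_le_pow_left hm _
    omega
  have hmod : R ≡ m ^ e ^ s [MOD p] := hR1.trans hN1.symm
  obtain ⟨j, hj⟩ := (Nat.modEq_iff_dvd' hNR).mp hmod
  have hNeq : m ^ e ^ s = R + p * j := by omega
  have hmem : GenS p e r (m ^ e ^ s) := hNeq ▸ add_mul_d hRmem j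
  exact of_pow s hmem

end GenSAux

/-- If `p` and `q` are primes with `p = q^k + 1` for some `k ≥ 1`, then for
every `n ≥ 1` and `r ≥ 2` with `p ∤ r`, the solution `S(p, qⁿ, r)` is maximal. -/
theorem genS_maximal_prime_power (p q : ℕ) (hp : p.Prime) (hq : q.Prime)
    (h : ∃ k : ℕ, 1 ≤ k ∧ p = q ^ k + 1) (n : ℕ) (hn : 1 ≤ n)
    (r : ℕ) (hr : 2 ≤ r) (hpr : ¬ (p ∣ r)) :
    {m : ℕ | GenS p (q ^ n) r m} = {m : ℕ | 2 ≤ m ∧ ¬ (p ∣ m)} := by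
  obtain ⟨k, hk1, hkp⟩ := h
  have hq2 : 2 ≤ q := hq.two_le
  have he2 : 2 ≤ q ^ n := le_trans hq2 (Nat.le_self_pow (by omega) q)
  ext m
  simp only [Set.mem_setOf_eq]
  constructor
  · intro hm
    exact GenSAux.genS_sub p (q ^ n) r (by omega) hp hr hpr hm
  · rintro ⟨hm2, hpm⟩
    apply GenSAux.key p (q ^ n) r k he2 hp ?_ hpr m hm2 hpm
    intro b hb
    have hcop : Nat.Coprime b p := ((Nat.Prime.coprime_iff_not_dvd hp).mpr hb).symm
    have hft : b ^ (p - 1) ≡ 1 [MOD p] := by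
      have h := Nat.ModEq.pow_totient hcop
      rwa [Nat.totient_prime hp] at h
    have hp1 : p - 1 = q ^ k := by omega
    obtain ⟨n', rfl⟩ : ∃ n', n = n' + 1 := ⟨n - 1, by omega⟩
    have hE : (q ^ (n' + 1)) ^ k = (p - 1) * (q ^ k) ^ n' := by
      rw [hp1, ← pow_mul, ← pow_mul, ← pow_add]
      congr 1
      ring
    calc b ^ (q ^ (n' + 1)) ^ k = (b ^ (p - 1)) ^ (q ^ k) ^ n' := by rw [hE, pow_mul]
      _ ≡ 1 ^ (q ^ k) ^ n' [MOD p] := hft.pow _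
      _ = 1 := one_pow _
end

section
/- Let p be a prime and r ≥ 2 an integer with p ∤ r. There exists an integer e with 2 ≤ e ≤ p − 2 such that the solution S(p, e, r) is maximal if and only if p − 1 is not squarefree. -/
namespace GenSAux

lemma add_p {p e r n : ℕ} (h : GenS p e r n) : GenS p e r (n + p) :=
  GenS.down _ (GenS.up _ h)

lemma add_mul {p e r n : ℕ} (h : GenS p e r n) (t : ℕ) : GenS p e r (n + t * p) := by
  induction t with
  | zero => simpa using h
  | succ t ih =>
      have h2 := add_p ih
      have heq : n + (t + 1) * p = n + t * p + p := by ring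
      rwa [heq]

lemma of_le_cast {p e r a b : ℕ} (h : GenS p e r a) (hle : a ≤ b)
    (hc : (a : ZMod p) = (b : ZMod p)) : GenS p e r b := by
  have hmod : a ≡ b [MOD p] := (ZMod.natCast_eq_natCast_iff a b p).mp hc
  obtain ⟨t, ht⟩ := (Nat.modEq_iff_dvd' hle).mp hmod
  have hb : b = a + t * p := by
    have h2 := Nat.eq_add_of_sub_eq hle ht
    rw [h2, Nat.mul_comm, Nat.add_comm]
  rw [hb]; exact add_mul h t

lemma of_pow_s17 {p e r : ℕ} (k : ℕ) {n : ℕ} (h : GenS p e r (n ^ e ^ k)) : GenS p e r n := by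
  induction k with
  | zero => simpa using h
  | succ k ih =>
      apply ih
      apply GenS.down
      have heq : (n ^ e ^ k) ^ e = n ^ e ^ (k + 1) := by
        rw [← pow_mul, ← pow_succ]
      rwa [heq]

/-- iterate of the up map starting from `r` -/
def tower (p e r : ℕ) : ℕ → ℕ
  | 0 => r
  | k + 1 => (tower p e r k + p) ^ e

lemma tower_mem (p e r k : ℕ) : GenS p e r (tower p e r k) := by
  induction k with
  | zero => exact GenS.base
  | succ k ih => exact GenS.up _ ih

lemma tower_cast (p e r k : ℕ) :
    ((tower p e r k : ℕ) : ZMod p) = (r : ZMod p) ^ e ^ k := by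
  induction k with
  | zero => simp [tower]
  | succ k ih =>
      have : ((tower p e r (k + 1) : ℕ) : ZMod p)
          = (((tower p e r k : ℕ) : ZMod p) + (p : ZMod p)) ^ e := by
        simp [tower]
      rw [this, ZMod.natCast_self, add_zero, ih, ← pow_mul, ← pow_succ]

lemma mem_bounds {p e r : ℕ} (hp : p.Prime) (he : 1 ≤ e) (hr : 2 ≤ r) (hpr : ¬ p ∣ r) :
    ∀ n, GenS p e r n → 2 ≤ n ∧ ¬ p ∣ n := by
  intro n h
  induction h with
  | base => exact ⟨hr, hpr⟩
  | down n h ih =>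
      obtain ⟨h2, hnd⟩ := ih
      constructor
      · by_contra hn
        push_neg at hn
        have hle : n ^ e ≤ 1 ^ e := Nat.pow_le_pow_left (by omega) e
        simp at hle; omega
      · intro hd; exact hnd (dvd_pow hd (by omega))
  | up n h ih =>
      obtain ⟨h2, hnd⟩ := ih
      constructor
      · calc 2 ≤ n + p := by omega
          _ ≤ (n + p) ^ e := Nat.le_self_pow (by omega) _
      · intro hd
        have h3 : p ∣ n + p := hp.dvd_of_dvd_pow hd
        have h4 : p ∣ (n + p) - p := Nat.dvd_sub h3 (dvd_refl p)
        simp at h4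
        exact hnd h4

lemma invariant {p e r q : ℕ} (hp : p.Prime) (he : 1 ≤ e) (hr : 2 ≤ r) (hpr : ¬ p ∣ r)
    (hq : q.Prime) (hqm : q ∣ p - 1) (hqe : ¬ q ∣ e) :
    ∀ n, GenS p e r n →
      ((n : ZMod p) ^ ((p - 1) / q) = 1 ↔ (r : ZMod p) ^ ((p - 1) / q) = 1) := by
  haveI := Fact.mk hp
  have key : ∀ n : ℕ, ¬ p ∣ n →
      ((((n : ZMod p)) ^ e) ^ ((p - 1) / q) = 1 ↔ (n : ZMod p) ^ ((p - 1) / q) = 1) := by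
    intro n hn
    rw [← pow_mul, mul_comm, pow_mul]
    set x := (n : ZMod p) ^ ((p - 1) / q) with hxdef
    have hx0 : (n : ZMod p) ≠ 0 := by
      rw [Ne, ZMod.natCast_eq_zero_iff]
      exact hn
    have hxq : x ^ q = 1 := by
      rw [hxdef, ← pow_mul, Nat.div_mul_cancel hqm, ZMod.pow_card_sub_one_eq_one hx0]
    constructor
    · intro hxe
      have h1 : orderOf x ∣ q := orderOf_dvd_of_pow_eq_one hxq
      have h2 : orderOf x ∣ e := orderOf_dvd_of_pow_eq_one hxe
      have hg : Nat.gcd q e = 1 := (Nat.Prime.coprime_iff_not_dvd hq).mpr hqe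
      have h3 : orderOf x ∣ Nat.gcd q e := Nat.dvd_gcd h1 h2
      rw [hg, Nat.dvd_one] at h3
      exact orderOf_eq_one_iff.mp h3
    · intro hx1; rw [hx1, one_pow]
  intro n h
  induction h with
  | base => exact Iff.rfl
  | down n h ih =>
      have hn : ¬ p ∣ n := (mem_bounds hp he hr hpr n (GenS.down n h)).2
      have hcast : ((↑(n ^ e) : ZMod p)) = ((n : ZMod p)) ^ e := by push_cast; ring
      rw [hcast] at ih
      exact (key n hn).symm.trans ih
  | up n h ih =>
      have hn : ¬ p ∣ n := (mem_bounds hp he hr hpr n h).2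
      have hcast : ((↑((n + p) ^ e) : ZMod p)) = ((n : ZMod p)) ^ e := by
        push_cast
        rw [ZMod.natCast_self, add_zero]
      rw [hcast]
      exact (key n hn).trans ih

end GenSAux

open GenSAux in
/-- For a prime `p` and `r ≥ 2` with `p ∤ r`: there exists `2 ≤ e ≤ p − 2`
such that `S(p,e,r)` is maximal if and only if `p − 1` is not squarefree. -/
theorem exists_maximal_iff_not_squarefree (p r : ℕ) (hp : p.Prime)
    (hr : 2 ≤ r) (hpr : ¬ (p ∣ r)) :
    (∃ e : ℕ, 2 ≤ e ∧ e ≤ p - 2 ∧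
        {n : ℕ | GenS p e r n} = {n : ℕ | 2 ≤ n ∧ ¬ (p ∣ n)}) ↔
      ¬ Squarefree (p - 1) := by
  haveI := Fact.mk hp
  have hp2 : 2 ≤ p := hp.two_le
  constructor
  · rintro ⟨e, he2, hep, hS⟩ hsf
    -- p ≥ 4, so p ≥ 5 (prime), m = p - 1
    have hp4 : 4 ≤ p := by omega
    set m := p - 1 with hm
    have hm3 : 3 ≤ m := by omega
    -- find a prime q ∣ m with ¬ q ∣ e
    obtain ⟨q, hq, hqm, hqe⟩ : ∃ q : ℕ, q.Prime ∧ q ∣ m ∧ ¬ q ∣ e := by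
      set d := Nat.gcd m e with hd
      have hdm : d ∣ m := Nat.gcd_dvd_left m e
      by_cases hdem : d = m
      · exfalso
        have : m ∣ e := hdem ▸ Nat.gcd_dvd_right m e
        have := Nat.le_of_dvd (by omega) this
        omega
      · have hdpos : 0 < d := Nat.gcd_pos_of_pos_left e (by omega)
        have hdlt : d < m := lt_of_le_of_ne (Nat.le_of_dvd (by omega) hdm) hdem
        have h2 : 2 ≤ m / d := by
          have h1 : d * (m / d) = m := Nat.mul_div_cancel' hdm
          rcases Nat.lt_or_ge (m / d) 2 with h | h
          · interval_cases h' : (m / d) <;> omega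
          · exact h
        refine ⟨(m / d).minFac, Nat.minFac_prime (by omega), ?_, ?_⟩
        · exact dvd_trans ((m / d).minFac_dvd) (Nat.div_dvd_of_dvd hdm)
        · intro hqe
          have hq1 : (m / d).minFac ∣ m / d := Nat.minFac_dvd _
          have hq2 : (m / d).minFac ∣ d :=
            Nat.dvd_gcd (dvd_trans hq1 (Nat.div_dvd_of_dvd hdm)) hqe
          have hq3 : d * (m / d).minFac ∣ m := by
            rwa [Nat.dvd_div_iff_mul_dvd hdm] at hq1
          have hq4 : (m / d).minFac * (m / d).minFac ∣ m :=
            dvd_trans (mul_dvd_mul_right hq2 _) hq3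
          have := hsf (m / d).minFac hq4
          exact Nat.Prime.one_lt (Nat.minFac_prime (by omega)) |>.ne'
            (Nat.isUnit_iff.mp this)
    -- invariant
    have hmem : ∀ n : ℕ, 2 ≤ n → ¬ p ∣ n → GenS p e r n := by
      intro n h1 h2
      have : n ∈ {n : ℕ | 2 ≤ n ∧ ¬ (p ∣ n)} := ⟨h1, h2⟩
      rwa [← hS] at this
    have hinv := invariant hp (by omega) hr hpr hq hqm hqe
    -- p + 1 gives that r-side invariant is true
    have hP1 : ((p + 1 : ℕ) : ZMod p) ^ ((p - 1) / q) = 1 := by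
      push_cast
      rw [ZMod.natCast_self, zero_add, one_pow]
    have hrtrue : (r : ZMod p) ^ ((p - 1) / q) = 1 := by
      have := hinv (p + 1) (hmem (p + 1) (by omega) (by
        intro h; have := Nat.dvd_sub h (dvd_refl p); simp at this; omega))
      exact this.mp hP1
    -- generator gives false
    obtain ⟨g, hg⟩ := IsCyclic.exists_generator (α := (ZMod p)ˣ)
    have hord : orderOf g = p - 1 := by
      rw [orderOf_eq_card_of_forall_mem_zpowers hg, Nat.card_eq_fintype_card,
        ZMod.card_units_eq_totient, Nat.totient_prime hp]
    set b := ((g : (ZMod p)ˣ) : ZMod p).val with hb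
    have hbcast : ((b : ℕ) : ZMod p) = ((g : (ZMod p)ˣ) : ZMod p) := by
      rw [hb, ZMod.natCast_val, ZMod.cast_id]
    have hbne : ((g : (ZMod p)ˣ) : ZMod p) ≠ 0 := Units.ne_zero _
    have hpb : ¬ p ∣ b := by
      rw [← ZMod.natCast_eq_zero_iff, hbcast]
      exact hbne
    have hb2 : 2 ≤ b := by
      rcases Nat.lt_or_ge b 2 with h | h
      · exfalso
        interval_cases b
        · simp at hbcast; exact hbne hbcast.symm
        · have hg1 : (g : (ZMod p)ˣ) = 1 := by
            apply Units.ext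
            rw [← hbcast]; simp
          rw [hg1] at hord
          simp at hord
          omega
      · exact h
    have hbfalse : (b : ZMod p) ^ ((p - 1) / q) = 1 :=
      (hinv b (hmem b hb2 hpb)).mpr hrtrue
    rw [hbcast] at hbfalse
    have hdvd : orderOf ((g : (ZMod p)ˣ) : ZMod p) ∣ (p - 1) / q :=
      orderOf_dvd_of_pow_eq_one hbfalse
    rw [orderOf_units, hord] at hdvd
    have hqle : q ≤ m := Nat.le_of_dvd (by omega) hqm
    have hdivlt : m / q < m := Nat.div_lt_self (by omega) hq.one_lt
    have hdivpos : 0 < m / q := Nat.div_pos hqle hq.pos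
    have := Nat.le_of_dvd hdivpos hdvd
    omega
  · intro hsf
    rw [Nat.squarefree_iff_prime_squarefree] at hsf
    push_neg at hsf
    obtain ⟨q, hq, hqq⟩ := hsf
    have hqp : q.Prime := hq
    set m := p - 1 with hm
    have hmpos : 0 < m := by omega
    have hq2 : 2 ≤ q := hqp.two_le
    have hqqle : q * q ≤ m := Nat.le_of_dvd hmpos hqq
    have hqm : q ∣ m := dvd_trans (Dvd.intro q rfl) hqq
    refine ⟨m / q, ?_, ?_, ?_⟩
    · -- 2 ≤ m / q
      have : q ≤ m / q := Nat.le_div_iff_mul_le (by omega) |>.mpr (by omega)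
      omega
    · -- m / q ≤ p - 2
      have : m / q < m := Nat.div_lt_self hmpos hqp.one_lt
      omega
    · set e := m / q with he
      have heq : e * q = m := Nat.div_mul_cancel hqm
      have he2 : 2 ≤ e := by
        have : q ≤ e := Nat.le_div_iff_mul_le (by omega) |>.mpr (by omega)
        omega
      have hqe : q ∣ e := by
        rw [he, Nat.dvd_div_iff_mul_dvd hqm]
        exact hqq
      have hme2 : m ∣ e ^ 2 := by
        have : e * q ∣ e * e := mul_dvd_mul_left e hqe
        rw [heq] at this; rw [sq]; exact this
      -- key: for k ≥ 2 and p ∤ x, x ^ (e ^ k) ≡ 1 mod p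
      have key : ∀ k : ℕ, 2 ≤ k → ∀ x : ℕ, ¬ p ∣ x → ((x : ℕ) : ZMod p) ^ e ^ k = 1 := by
        intro k hk x hx
        have hx0 : (x : ZMod p) ≠ 0 := by
          rw [Ne, ZMod.natCast_eq_zero_iff]; exact hx
        have hmk : m ∣ e ^ k := dvd_trans hme2 (pow_dvd_pow e hk)
        obtain ⟨t, ht⟩ := hmk
        rw [ht, pow_mul, ZMod.pow_card_sub_one_eq_one hx0, one_pow]
      ext n
      simp only [Set.mem_setOf_eq]
      constructor
      · exact fun h => mem_bounds hp (by omega) hr hpr n h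
      · rintro ⟨hn2, hpn⟩
        set s := tower p e r 2 with hs
        have hsmem : GenS p e r s := tower_mem p e r 2
        have hscast : ((s : ℕ) : ZMod p) = 1 := by
          rw [hs, tower_cast]
          exact key 2 le_rfl r hpr
        set K := s + 2 with hK
        have hncast : ((n ^ e ^ K : ℕ) : ZMod p) = 1 := by
          push_cast
          exact key K (by omega) n hpn
        have hle : s ≤ n ^ e ^ K := by
          have h1 : K < 2 ^ K := Nat.lt_two_pow_self (n := K)
          have h2 : 2 ^ K ≤ e ^ K := Nat.pow_le_pow_left he2 K
          have h3 : e ^ K < 2 ^ e ^ K := Nat.lt_two_pow_self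
          have h4 : 2 ^ e ^ K ≤ n ^ e ^ K := Nat.pow_le_pow_left hn2 _
          omega
        have hmemK : GenS p e r (n ^ e ^ K) := by
          apply of_le_cast hsmem hle
          rw [hscast, hncast]
        exact of_pow_s17 K hmemK
end
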